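/- For positive integers k and n, the coefficient of z^n in (C(z)/z)^k equals (k/n)·binomial(k+2n-1, n-1), where C(z) = (1-√(1-4z))/2 is the Catalan generating function. -/

import Mathlib

open PowerSeries Nat

/-- The power series `C(z)/z = Σ_{n≥0} Catalan(n) z^n`, where `C(z) = (1-√(1-4z))/2` is the
Catalan generating function of plane rooted trees. -/
noncomputable def catalanSeries : PowerSeries ℚ := PowerSeries.mk fun n => (catalan n : ℚ)

lemma catalanSeries_eq : _root_.catalanSeries = 1 + PowerSeries.X * _root_.catalanSeries ^ 2 := by
  ext n
  cases n with
  | zero => simp [_root_.catalanSeries]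
  | succ n =>
    rw [map_add, PowerSeries.coeff_succ_X_mul]
    simp only [_root_.catalanSeries, coeff_mk, sq, PowerSeries.coeff_mul, coeff_mk,
      PowerSeries.coeff_one, Nat.succ_ne_zero, if_false, zero_add]
    rw [catalan_succ']
    push_cast
    rfl

noncomputable def G (n k : ℕ) : ℚ :=
  (k + 1) * (2 * n + k)! / (n ! * (n + k + 1)!)

lemma coeff_rec (n k : ℕ) :
    PowerSeries.coeff (n + 1) (_root_.catalanSeries ^ (k + 1)) =
      PowerSeries.coeff (n + 1) (_root_.catalanSeries ^ k) +
        PowerSeries.coeff n (_root_.catalanSeries ^ (k + 2)) := by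
  have h : _root_.catalanSeries ^ (k + 1) =
      _root_.catalanSeries ^ k + PowerSeries.X * _root_.catalanSeries ^ (k + 2) := by
    calc _root_.catalanSeries ^ (k + 1) = _root_.catalanSeries ^ k * _root_.catalanSeries := pow_succ _ _
    _ = _root_.catalanSeries ^ k * (1 + PowerSeries.X * _root_.catalanSeries ^ 2) := by
        rw [← catalanSeries_eq]
    _ = _root_.catalanSeries ^ k + PowerSeries.X * _root_.catalanSeries ^ (k + 2) := by ring
  rw [h, map_add, PowerSeries.coeff_succ_X_mul]

lemma G_rec (n k : ℕ) : G (n + 1) (k + 1) = G (n + 1) k + G n (k + 2) := by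
  unfold G
  have e1 : 2 * (n + 1) + (k + 1) = (2 * n + k + 2) + 1 := by ring
  have e2 : 2 * (n + 1) + k = (2 * n + k + 1) + 1 := by ring
  have e3 : 2 * n + (k + 2) = (2 * n + k + 1) + 1 := by ring
  have e4 : (n + 1) + (k + 1) + 1 = (n + k + 2) + 1 := by ring
  have e5 : (n + 1) + k + 1 = n + k + 2 := by ring
  have e6 : n + (k + 2) + 1 = (n + k + 2) + 1 := by ring
  rw [e1, e2, e3, e4, e5, e6, Nat.factorial_succ (2 * n + k + 2),
    Nat.factorial_succ (2 * n + k + 1), Nat.factorial_succ (n + k + 2), Nat.factorial_succ n]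
  have h1 : ((2 * n + k + 1)! : ℚ) ≠ 0 := Nat.cast_ne_zero.2 (Nat.factorial_ne_zero _)
  have h2 : ((n + k + 2)! : ℚ) ≠ 0 := Nat.cast_ne_zero.2 (Nat.factorial_ne_zero _)
  have h3 : ((n)! : ℚ) ≠ 0 := Nat.cast_ne_zero.2 (Nat.factorial_ne_zero _)
  field_simp
  push_cast
  ring

lemma coeff_eq_G (n k : ℕ) :
    PowerSeries.coeff n (_root_.catalanSeries ^ (k + 1)) = G n k := by
  induction n generalizing k with
  | zero =>
    rw [PowerSeries.coeff_zero_eq_constantCoeff, map_pow]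
    have hc : constantCoeff _root_.catalanSeries = 1 := by simp [_root_.catalanSeries]
    rw [hc, one_pow]
    unfold G
    have h : ((k)! : ℚ) ≠ 0 := Nat.cast_ne_zero.2 (Nat.factorial_ne_zero _)
    simp only [Nat.mul_zero, Nat.zero_add, Nat.factorial_zero, Nat.factorial_succ]
    push_cast
    field_simp
  | succ n ih =>
    induction k with
    | zero =>
      rw [pow_one]
      simp only [_root_.catalanSeries, coeff_mk]
      unfold G
      have h := succ_mul_catalan_eq_centralBinom (n + 1)
      have h2 : ((n + 1 + 1) : ℚ) * catalan (n + 1) = ((n + 1).centralBinom : ℚ) := by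
        exact_mod_cast congrArg (Nat.cast : ℕ → ℚ) h
      have h3 : ((n + 1).centralBinom : ℚ) = (2 * (n + 1))! / ((n + 1)! * (n + 1)!) := by
        rw [Nat.centralBinom, Nat.cast_choose ℚ (by omega),
          show 2 * (n + 1) - (n + 1) = n + 1 by omega]
      have hf1 : ((n + 1)! : ℚ) ≠ 0 := Nat.cast_ne_zero.2 (Nat.factorial_ne_zero _)
      rw [h3, eq_div_iff (by positivity)] at h2
      rw [show (n + 1) + 0 + 1 = (n + 1) + 1 from rfl, Nat.factorial_succ (n + 1),
        show 2 * (n + 1) + 0 = 2 * (n + 1) from rfl]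
      field_simp
      push_cast
      linear_combination h2
    | succ k ihk =>
      rw [coeff_rec, ihk, ih (k + 2), G_rec]

/-- For positive integers `k` and `n`, the coefficient of `z^n` in `(C(z)/z)^k` equals
`(k/n)·binomial(k+2n-1, n-1)`. -/
theorem coeff_catalan_pow (k n : ℕ) (hk : 1 ≤ k) (hn : 1 ≤ n) :
    PowerSeries.coeff n (_root_.catalanSeries ^ k) =
      (k : ℚ) / n * ((k + 2 * n - 1).choose (n - 1) : ℚ) := by
  obtain ⟨k, rfl⟩ := Nat.exists_eq_add_of_le hk
  obtain ⟨n, rfl⟩ := Nat.exists_eq_add_of_le hn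
  rw [show 1 + k = k + 1 by ring, show 1 + n = n + 1 by ring, coeff_eq_G]
  unfold G
  rw [show k + 1 + 2 * (n + 1) - 1 = 2 * n + k + 2 by omega, show n + 1 - 1 = n from rfl,
    Nat.cast_choose ℚ (by omega), show 2 * n + k + 2 - n = n + k + 2 by omega]
  have h1 : ((n)! : ℚ) ≠ 0 := Nat.cast_ne_zero.2 (Nat.factorial_ne_zero _)
  have h2 : ((n + k + 2)! : ℚ) ≠ 0 := Nat.cast_ne_zero.2 (Nat.factorial_ne_zero _)
  rw [show 2 * (n + 1) + k = 2 * n + k + 2 by ring,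
    show (n + 1) + k + 1 = n + k + 2 by ring, Nat.factorial_succ n]
  field_simp
  push_cast
  ring
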